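/- arXiv:math/0204243 — 2 statements merged into one kernel-verified Lean document; each statement's English description precedes it below -/
import Mathlib

section
/- Let p be a prime with p > 2 and let k be a perfect field of characteristic p. If f, g ∈ k[T] are polynomials such that the polynomial f(T^p + T^{p-1}) − g(T^{p-1}) has degree at most 1, then both f and g are constant polynomials (i.e., have degree at most 0). -/
open Polynomial

/-- Over a perfect field of char `p`, a polynomial with zero derivative is a `p`-th power. -/
private lemma pth_power_of_deriv_zero (p : ℕ) [Fact p.Prime] (k : Type*) [Field k] [CharP k p]
    [PerfectRing k p] {f : k[X]} (hf : derivative f = 0) : ∃ F : k[X], F ^ p = f := by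
  refine ⟨(f.contract p).map (frobeniusEquiv k p).symm, ?_⟩
  rw [← polynomial_expand_eq, expand_contract p hf (Fact.out (p := p.Prime)).ne_zero]

private lemma aux_ind (p : ℕ) (hp : p.Prime) (hp2 : 2 < p)
    (k : Type*) [Field k] [CharP k p] [PerfectField k] :
    ∀ n : ℕ, ∀ f g : k[X], f.natDegree ≤ n →
      (f.comp (X ^ p + X ^ (p - 1)) - g.comp (X ^ (p - 1))).degree ≤ 1 →
      f.degree ≤ 0 ∧ g.degree ≤ 0 := by
  haveI := Fact.mk hp
  set u : k[X] := X ^ p + X ^ (p - 1) with hu_def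
  set v : k[X] := X ^ (p - 1) with hv_def
  have hvdeg : v.natDegree = p - 1 := natDegree_X_pow _
  have hudeg : u.degree = (p : WithBot ℕ) := by
    rw [hu_def, degree_add_eq_left_of_degree_lt, degree_X_pow]
    rw [degree_X_pow, degree_X_pow]
    exact_mod_cast Nat.sub_lt hp.pos one_pos
  -- derivative of u and v
  have hdu : derivative u = -X ^ (p - 2) := by
    rw [hu_def, derivative_add, derivative_X_pow, derivative_X_pow]
    have h1 : ((p : ℕ) : k) = 0 := CharP.cast_eq_zero k p
    have h2 : ((p - 1 : ℕ) : k) = -1 := by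
      rw [Nat.cast_sub hp.one_lt.le, h1]; ring
    rw [h1, h2]
    have h3 : p - 1 - 1 = p - 2 := by omega
    rw [h3]
    simp
  have hdv : derivative v = -X ^ (p - 2) := by
    rw [hv_def, derivative_X_pow]
    have h2 : ((p - 1 : ℕ) : k) = -1 := by
      rw [Nat.cast_sub hp.one_lt.le, CharP.cast_eq_zero k p]; ring
    have h3 : p - 1 - 1 = p - 2 := by omega
    rw [h2, h3]
    simp
  intro n
  induction n using Nat.strong_induction_on with
  | _ n IH =>
    intro f g hfn h
    by_cases hf0 : f.degree ≤ 0
    · refine ⟨hf0, ?_⟩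
      -- f is constant, so g.comp v has degree ≤ 1, forcing g constant
      have hfc : f.comp u = C (f.coeff 0) := by
        conv_lhs => rw [eq_C_of_degree_le_zero hf0]
        exact C_comp
      have hgc : (g.comp v).degree ≤ 1 := by
        have h2 : g.comp v = C (f.coeff 0) - (f.comp u - g.comp v) := by rw [← hfc]; ring
        rw [h2]
        exact (degree_sub_le _ _).trans (max_le (degree_C_le.trans (by norm_num)) h)
      have hnd : (g.comp v).natDegree ≤ 1 := natDegree_le_iff_degree_le.mpr hgc
      rw [natDegree_comp, hvdeg] at hnd
      have hg0 : g.natDegree = 0 := by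
        by_contra hg
        have h1 : 1 ≤ g.natDegree := Nat.one_le_iff_ne_zero.mpr hg
        have h2 : p - 1 ≤ g.natDegree * (p - 1) := Nat.le_mul_of_pos_left _ h1
        omega
      obtain ⟨a, ha⟩ := natDegree_eq_zero.mp hg0
      rw [← ha]; exact degree_C_le
    · exfalso
      have hf1 : 1 ≤ f.natDegree := natDegree_pos_iff_degree_pos.mpr (not_le.mp hf0)
      have hn1 : 1 ≤ n := le_trans hf1 hfn
      -- Step 1: differentiate
      have hD : (derivative f).comp u = (derivative g).comp v := by
        have hdh : derivative (f.comp u - g.comp v) =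
            -X ^ (p - 2) * ((derivative f).comp u - (derivative g).comp v) := by
          rw [derivative_sub, derivative_comp, derivative_comp, hdu, hdv]; ring
        have hcoeff : derivative (f.comp u - g.comp v) = C ((f.comp u - g.comp v).coeff 1) := by
          conv_lhs => rw [eq_X_add_C_of_degree_le_one h]
          simp
        by_contra hne
        have hne' : (derivative f).comp u - (derivative g).comp v ≠ 0 := sub_ne_zero.mpr hne
        have hdeg : (C ((f.comp u - g.comp v).coeff 1)).degree ≤ 0 := degree_C_le
        rw [← hcoeff, hdh, degree_mul, degree_neg, degree_X_pow] at hdeg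
        have h0le : 0 ≤ ((derivative f).comp u - (derivative g).comp v).degree :=
          zero_le_degree_iff.mpr hne'
        have : ((p - 2 : ℕ) : WithBot ℕ) ≤ 0 := by
          calc ((p - 2 : ℕ) : WithBot ℕ) = ((p - 2 : ℕ) : WithBot ℕ) + 0 := by rw [add_zero]
            _ ≤ ((p - 2 : ℕ) : WithBot ℕ) +
                ((derivative f).comp u - (derivative g).comp v).degree := by
                  exact add_le_add_right h0le _
            _ ≤ 0 := hdeg
        have : (p - 2 : ℕ) ≤ 0 := by exact_mod_cast this
        omega
      -- Step 2: apply IH to the derivatives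
      have hdfn : (derivative f).natDegree < n :=
        lt_of_lt_of_le (natDegree_derivative_lt (by omega)) hfn
      have hzero : ((derivative f).comp u - (derivative g).comp v).degree ≤ 1 := by
        rw [hD, sub_self, degree_zero]; exact bot_le
      obtain ⟨hdf0, hdg0⟩ := IH _ hdfn (derivative f) (derivative g) le_rfl hzero
      -- the derivatives are equal constants
      have hdf : derivative f = C ((derivative f).coeff 0) := eq_C_of_degree_le_zero hdf0
      have hdg : derivative g = C ((derivative g).coeff 0) := eq_C_of_degree_le_zero hdg0
      set a : k := (derivative f).coeff 0 with ha_def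
      have hab : (derivative g).coeff 0 = a := by
        have := hD
        rw [hdf, hdg, C_comp, C_comp] at this
        exact C_injective this.symm
      -- Step 3: extract p-th roots
      have hFd : derivative (f - C a * X) = 0 := by
        rw [derivative_sub, hdf]; simp
      have hGd : derivative (g - C a * X) = 0 := by
        rw [derivative_sub, hdg, hab]; simp
      obtain ⟨F, hF⟩ := pth_power_of_deriv_zero p k hFd
      obtain ⟨G, hG⟩ := pth_power_of_deriv_zero p k hGd
      set b : k := (frobeniusEquiv k p).symm a with hb_def
      have hbp : (b : k) ^ p = a := frobeniusEquiv_symm_pow_p k p a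
      -- Step 4: key identity
      have key : f.comp u - g.comp v = (C b * X + (F.comp u - G.comp v)) ^ p := by
        rw [add_pow_char, sub_pow_char, mul_pow, ← C_pow, hbp,
          ← pow_comp, ← pow_comp, hF, hG, sub_comp, sub_comp, mul_comp, mul_comp,
          C_comp, C_comp, X_comp, X_comp, hu_def, hv_def]
        have hpsub : (X : k[X]) ^ p = X ^ (p - 1) * X := by
          rw [← pow_succ]; congr 1; omega
        rw [hpsub]; ring
      set P : k[X] := C b * X + (F.comp u - G.comp v) with hP_def
      have hPdeg : P.degree ≤ 0 := by
        by_contra hP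
        have h1 : 0 < P.natDegree := natDegree_pos_iff_degree_pos.mpr (lt_of_not_ge hP)
        have h2 : (P ^ p).natDegree ≤ 1 := natDegree_le_iff_degree_le.mpr (key ▸ h)
        rw [natDegree_pow] at h2
        have : p ≤ p * P.natDegree := Nat.le_mul_of_pos_right _ h1
        omega
      -- Step 5: apply IH to F, G
      have hFG : (F.comp u - G.comp v).degree ≤ 1 := by
        have : F.comp u - G.comp v = P - C b * X := by rw [hP_def]; ring
        rw [this]
        refine (degree_sub_le _ _).trans (max_le (hPdeg.trans (by norm_num)) ?_)
        refine (degree_mul_le _ _).trans ?_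
        calc (C b).degree + X.degree ≤ 0 + 1 := add_le_add degree_C_le (le_of_eq degree_X)
          _ = 1 := by norm_num
      have hFdeg : p * F.natDegree ≤ n := by
        have h1 : (F ^ p).natDegree = (f - C a * X).natDegree := by rw [hF]
        rw [natDegree_pow] at h1
        have h2 : (f - C a * X).natDegree ≤ n := by
          refine (natDegree_sub_le _ _).trans (max_le hfn ?_)
          exact le_trans (natDegree_C_mul_le _ _) (by rw [natDegree_X]; omega)
        omega
      have hFn : F.natDegree < n := by
        have h3 : 3 * F.natDegree ≤ p * F.natDegree := Nat.mul_le_mul_right _ (by omega)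
        omega
      obtain ⟨hF0, hG0⟩ := IH _ hFn F G le_rfl hFG
      -- Step 6: conclude a = 0, so f is constant, contradiction
      have hFc : F.comp u = C (F.coeff 0) := by
        conv_lhs => rw [eq_C_of_degree_le_zero hF0]
        exact C_comp
      have hGc : G.comp v = C (G.coeff 0) := by
        conv_lhs => rw [eq_C_of_degree_le_zero hG0]
        exact C_comp
      have hb0 : b = 0 := by
        have hc : P.coeff 1 = 0 := coeff_eq_zero_of_degree_lt (lt_of_le_of_lt hPdeg (by norm_num))
        rw [hP_def, hFc, hGc] at hc
        simpa using hc
      have ha0 : a = 0 := by rw [← hbp, hb0]; simp [hp.ne_zero]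
      have hfc : f = F ^ p := by
        rw [hF, ha0]; simp
      apply hf0
      rw [hfc]
      calc (F ^ p).degree = p • F.degree := degree_pow _ _
        _ ≤ p • (0 : WithBot ℕ) := by
            exact nsmul_le_nsmul_right hF0 p
        _ = 0 := by simp

/-- Key inductive claim in the proof of Lemma 5.2: over a perfect field of
characteristic `p > 2`, if `f(T^p + T^(p-1)) - g(T^(p-1))` has degree at most `1`,
then `f` and `g` are constant. -/
theorem stmt_1 (p : ℕ) (hp : p.Prime) (hp2 : 2 < p)
    (k : Type*) [Field k] [CharP k p] [PerfectField k]
    (f g : k[X])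
    (h : (f.comp (X ^ p + X ^ (p - 1)) - g.comp (X ^ (p - 1))).degree ≤ 1) :
    f.degree ≤ 0 ∧ g.degree ≤ 0 :=
  aux_ind p hp hp2 k f.natDegree f g le_rfl h
end

section
/- Let p be a prime with p > 2 and let k be an algebraic closure of the finite field with p elements. There is no intermediate field K of the extension k(T)/k such that K is contained in both subfields k(T^p + T^{p-1}) and k(T^{p-1}) and k(T) is a finite-dimensional vector space over K. -/
open Polynomial

set_option linter.unusedSectionVars false
variable {k : Type*} [Field k] [IsAlgClosed k]

lemma frob_inj_poly (p : ℕ) [Fact p.Prime] [CharP k p] (A B : k[X]) (h : A ^ p = B ^ p) : A = B := by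
  have hp : p ≠ 0 := (Fact.out : p.Prime).ne_zero
  have h2 : (A - B) ^ p = 0 := by rw [sub_pow_char, h, sub_self]
  exact sub_eq_zero.1 (pow_eq_zero_iff hp |>.1 h2)

lemma pth_root_poly (p : ℕ) [Fact p.Prime] [CharP k p] (W : k[X]) (hD : derivative W = 0) : ∃ V : k[X], V ^ p = W := by
  have hp : p ≠ 0 := (Fact.out : p.Prime).ne_zero
  refine ⟨(contract p W).map (frobeniusEquiv k p).symm, ?_⟩
  have h1 : ((contract p W).map (frobeniusEquiv k p).symm).map (frobenius k p) = contract p W := by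
    rw [map_map]
    have : (frobenius k p).comp ((frobeniusEquiv k p).symm : k →+* k) = RingHom.id k :=
      frobenius_comp_frobeniusEquiv_symm k p
    rw [this, map_id]
  calc ((contract p W).map (frobeniusEquiv k p).symm) ^ p
      = map (frobenius k p) (expand k p ((contract p W).map (frobeniusEquiv k p).symm)) :=
        (map_frobenius_expand (p := p) _).symm
    _ = expand k p (((contract p W).map (frobeniusEquiv k p).symm).map (frobenius k p)) := by
        rw [map_expand]
    _ = expand k p (contract p W) := by rw [h1]
    _ = W := expand_contract p hD hp

lemma coeff_pow_p_nonmult (p : ℕ) [Fact p.Prime] [CharP k p] (B : k[X]) (j : ℕ) (hj : ¬ p ∣ j) : (B ^ p).coeff j = 0 := by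
  rw [← map_frobenius_expand (p := p) B, coeff_map, coeff_expand (Fact.out : p.Prime).pos]
  simp [hj]

lemma fp_deriv (p : ℕ) [Fact p.Prime] [CharP k p] (hp2 : 2 < p) : derivative (X ^ p + X ^ (p-1) : k[X]) = -(X ^ (p-2)) := by
  rw [derivative_add, derivative_X_pow, derivative_X_pow]
  have h1 : ((p : ℕ) : k) = 0 := CharP.cast_eq_zero k p
  have h2 : (((p-1 : ℕ)) : k) = -1 := by
    rw [Nat.cast_sub (by omega : 1 ≤ p), h1]; ring
  have h3 : p - 1 - 1 = p - 2 := by omega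
  rw [h1, h2, h3]
  simp

lemma iso_core (p : ℕ) [Fact p.Prime] [CharP k p] (hp2 : 2 < p) (ζ : k) (hζ1 : ζ ^ (p-1) = 1) (hζ : ζ ≠ 1) :
    ∀ n : ℕ, ∀ W : k[X], W.natDegree ≤ n → W ≠ 0 →
      (∃ c : k, (W.comp (X ^ p + X ^ (p-1))).comp (C ζ * X)
          = C c * W.comp (X ^ p + X ^ (p-1))) →
      W.natDegree = 0 := by
  have hppos : 0 < p := by omega
  intro n
  induction n with
  | zero => intro W h _ _; omega
  | succ n IH =>
    intro W hWn hW0 hex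
    obtain ⟨c, hc⟩ := hex
    by_cases hdeg : W.natDegree = 0
    · exact hdeg
    by_cases hD : derivative W = 0
    · -- Frobenius descent case
      obtain ⟨V, hV⟩ := pth_root_poly p W hD
      have hV0 : V ≠ 0 := by rintro rfl; rw [zero_pow hppos.ne'] at hV; exact hW0 hV.symm
      have hWV : W.natDegree = p * V.natDegree := by rw [← hV, natDegree_pow]
      rcases Nat.eq_zero_or_pos V.natDegree with h0 | hpos
      · rw [h0] at hWV; omega
      have hVn : V.natDegree ≤ n := by
        have h2 : 2 * V.natDegree ≤ p * V.natDegree := Nat.mul_le_mul_right _ (by omega)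
        omega
      obtain ⟨c₁, hc₁⟩ := IsAlgClosed.exists_pow_nat_eq c hppos
      have hyp : ((V.comp (X ^ p + X ^ (p-1))).comp (C ζ * X)) ^ p
          = (C c₁ * V.comp (X ^ p + X ^ (p-1))) ^ p := by
        rw [← pow_comp, ← pow_comp, hV, hc, mul_pow, ← C_pow, hc₁, ← hV, pow_comp]
      have := IH V hVn hV0 ⟨c₁, frob_inj_poly p _ _ hyp⟩
      omega
    · -- derivative case
      have hf' : derivative (X ^ p + X ^ (p-1) : k[X]) = -(X ^ (p-2)) := fp_deriv p hp2
      have hXp2 : (X ^ (p-2) : k[X]) ≠ 0 := pow_ne_zero _ X_ne_zero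
      have hζp2 : (C ζ : k[X]) * C (ζ ^ (p-2)) = 1 := by
        rw [← C_mul, ← pow_succ']
        rw [show (p-2)+1 = p-1 by omega, hζ1, C_1]
      have e0 : derivative (W.comp (X ^ p + X ^ (p-1))) =
          -(X ^ (p-2)) * ((derivative W).comp (X ^ p + X ^ (p-1))) := by
        rw [derivative_comp, hf']
      have e1 : derivative ((W.comp (X ^ p + X ^ (p-1))).comp (C ζ * X)) =
          C ζ * ((-(C (ζ ^ (p-2)) * X ^ (p-2))) *
            (((derivative W).comp (X ^ p + X ^ (p-1))).comp (C ζ * X))) := by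
        rw [derivative_comp, e0, mul_comp, neg_comp, pow_comp, X_comp]
        rw [mul_pow, ← C_pow]
        simp only [derivative_mul, derivative_C, zero_mul, derivative_X, mul_one, zero_add]
      have hder : C ζ * ((-(C (ζ ^ (p-2)) * X ^ (p-2))) *
            (((derivative W).comp (X ^ p + X ^ (p-1))).comp (C ζ * X)))
          = C c * (-(X ^ (p-2)) * ((derivative W).comp (X ^ p + X ^ (p-1)))) := by
        rw [← e1, hc, derivative_C_mul, e0]
      have key : ((derivative W).comp (X ^ p + X ^ (p-1))).comp (C ζ * X)
          = C c * ((derivative W).comp (X ^ p + X ^ (p-1))) := by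
        apply mul_left_cancel₀ (neg_ne_zero.2 hXp2)
        linear_combination hder + X ^ (p-2) *
          (((derivative W).comp (X ^ p + X ^ (p-1))).comp (C ζ * X)) * hζp2
      have hDn : (derivative W).natDegree ≤ n := by
        have := natDegree_derivative_lt hdeg; omega
      have hD0 := IH (derivative W) hDn hD ⟨c, key⟩
      have hDa := eq_C_of_natDegree_eq_zero hD0
      set a := (derivative W).coeff 0 with ha_def
      have ha : a ≠ 0 := by
        intro h; rw [h, C_0] at hDa; exact hD hDa
      exfalso
      have hV₂ : derivative (W - C a * X) = 0 := by
        have h1 : derivative (C a * X : k[X]) = C a := by simp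
        rw [derivative_sub, h1, hDa, sub_self]
      obtain ⟨V₁, hV₁⟩ := pth_root_poly p (W - C a * X) hV₂
      have hWf : W.comp (X ^ p + X ^ (p-1)) =
          C a * (X ^ p + X ^ (p-1)) + (V₁.comp (X ^ p + X ^ (p-1))) ^ p := by
        rw [show W = C a * X + V₁ ^ p by rw [hV₁]; ring]
        rw [add_comp, mul_comp, C_comp, X_comp, pow_comp]
      have hζp : ζ ^ p = ζ := by
        rw [show p = (p-1)+1 by omega, pow_succ, hζ1, one_mul]
      have hfL : (X ^ p + X ^ (p-1) : k[X]).comp (C ζ * X) = C ζ * X ^ p + X ^ (p-1) := by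
        rw [add_comp, pow_comp, pow_comp, X_comp, mul_pow, mul_pow, ← C_pow, ← C_pow,
          hζ1, hζp, C_1, one_mul]
      have hcL : C a * (C ζ * X ^ p + X ^ (p-1)) + ((V₁.comp (X ^ p + X ^ (p-1))).comp (C ζ * X)) ^ p
          = C c * (C a * (X ^ p + X ^ (p-1)) + (V₁.comp (X ^ p + X ^ (p-1))) ^ p) := by
        calc C a * (C ζ * X ^ p + X ^ (p-1)) + ((V₁.comp (X ^ p + X ^ (p-1))).comp (C ζ * X)) ^ p
            = (W.comp (X ^ p + X ^ (p-1))).comp (C ζ * X) := by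
              rw [hWf, add_comp, mul_comp, C_comp, pow_comp, hfL]
          _ = C c * W.comp (X ^ p + X ^ (p-1)) := hc
          _ = _ := by rw [hWf]
      have hndvd : ¬ p ∣ (p-1) := by
        intro h; have := Nat.le_of_dvd (by omega) h; omega
      have hcoeff := congrArg (fun q => Polynomial.coeff q (p-1)) hcL
      simp only [coeff_add, coeff_C_mul, coeff_X_pow, if_neg (show ¬ (p-1) = p by omega),
        if_pos rfl, if_true, coeff_pow_p_nonmult p _ _ hndvd, mul_zero, zero_add, add_zero, mul_one,
        mul_add] at hcoeff
      -- hcoeff : a = c * a  (roughly)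
      have hc1 : c = 1 := by
        have h2 : c * a = 1 * a := by rw [one_mul]; exact hcoeff.symm
        exact mul_right_cancel₀ ha h2
      rw [hc1, C_1, one_mul] at hcL
      have hdiff : ((V₁.comp (X ^ p + X ^ (p-1))).comp (C ζ * X)) ^ p
            - (V₁.comp (X ^ p + X ^ (p-1))) ^ p = C (a * (1 - ζ)) * X ^ p := by
        rw [C_mul, C_sub, C_1]
        linear_combination hcL
      obtain ⟨b, hb⟩ := IsAlgClosed.exists_pow_nat_eq (a * (1-ζ)) hppos
      have hΨL : (V₁.comp (X ^ p + X ^ (p-1))).comp (C ζ * X) - V₁.comp (X ^ p + X ^ (p-1))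
          = C b * X := by
        apply frob_inj_poly p
        rw [sub_pow_char, hdiff, mul_pow, ← C_pow, hb]
      have hΨ' : derivative (V₁.comp (X ^ p + X ^ (p-1))) =
          -(X ^ (p-2)) * ((derivative V₁).comp (X ^ p + X ^ (p-1))) := by
        rw [derivative_comp, hf']
      have hdz := congrArg derivative hΨL
      rw [derivative_sub, derivative_comp, hΨ'] at hdz
      rw [mul_comp, neg_comp, pow_comp, X_comp, mul_pow, ← C_pow] at hdz
      simp only [derivative_mul, derivative_C, zero_mul, derivative_X, mul_one, zero_add] at hdz
      -- hdz : C ζ * (-(C (ζ^(p-2)) * X^(p-2)) * ((derivative V₁).comp (...)).comp (CζX))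
      --        - (-(X^(p-2)) * (derivative V₁).comp (...)) = C b
      have key2 : (X ^ (p-2) : k[X]) *
          ((derivative V₁).comp (X ^ p + X ^ (p-1))
            - ((derivative V₁).comp (X ^ p + X ^ (p-1))).comp (C ζ * X)) = C b := by
        linear_combination hdz + X ^ (p-2) *
          (((derivative V₁).comp (X ^ p + X ^ (p-1))).comp (C ζ * X)) * hζp2
      have hbz := congrArg (fun q => Polynomial.eval 0 q) key2
      simp only [eval_mul, eval_pow, eval_X, eval_C,
        zero_pow (show p-2 ≠ 0 by omega), zero_mul] at hbz
      have : a * (1 - ζ) = 0 := by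
        rw [← hb, ← hbz, zero_pow (show p ≠ 0 by omega)]
      rcases mul_eq_zero.1 this with h | h
      · exact ha h
      · exact hζ (sub_eq_zero.1 h).symm


open Polynomial


lemma fp_natDegree (p : ℕ) (hp2 : 2 < p) : (X ^ p + X ^ (p-1) : k[X]).natDegree = p := by
  have hlt : (X ^ (p-1) : k[X]).degree < (X ^ p : k[X]).degree := by
    rw [degree_X_pow, degree_X_pow]
    exact_mod_cast (by omega : p - 1 < p)
  have := degree_add_eq_left_of_degree_lt hlt
  rw [degree_X_pow] at this
  exact natDegree_eq_of_degree_eq_some this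

lemma fp_comp_ne_zero (p : ℕ) (hp2 : 2 < p) (q : k[X]) (hq : q ≠ 0) :
    q.comp (X ^ p + X ^ (p-1)) ≠ 0 := by
  have hd : (X ^ p + X ^ (p-1) : k[X]).natDegree ≠ 0 := by rw [fp_natDegree p hp2]; omega
  have hlc : (X ^ p + X ^ (p-1) : k[X]).leadingCoeff = 1 := by
    have hlt : (X ^ (p-1) : k[X]).degree < (X ^ p : k[X]).degree := by
      rw [degree_X_pow, degree_X_pow]
      exact_mod_cast (by omega : p - 1 < p)
    rw [leadingCoeff_add_of_degree_lt' hlt, leadingCoeff_X_pow]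
  intro h
  have := leadingCoeff_comp (p := q) (q := (X ^ p + X ^ (p-1) : k[X])) hd
  rw [h, leadingCoeff_zero, hlc, one_pow, mul_one] at this
  exact hq (leadingCoeff_eq_zero.1 this.symm)

lemma exists_zeta (p : ℕ) [Fact p.Prime] [CharP k p] (hp2 : 2 < p) :
    ∃ ζ : k, ζ ^ (p-1) = 1 ∧ ζ ≠ 1 := by
  set Q : k[X] := ∑ i ∈ Finset.range (p-1), X ^ i with hQ
  have hQc : Q.coeff (p-2) = 1 := by
    rw [hQ, finset_sum_coeff]
    rw [Finset.sum_eq_single (p-2)]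
    · simp
    · intro b _ hb; rw [coeff_X_pow, if_neg (fun h => hb h.symm)]
    · intro h; exact absurd (Finset.mem_range.2 (by omega)) h
  have hQ0 : Q ≠ 0 := fun h => by simp [h] at hQc
  have hdQ : Q.degree ≠ 0 := by
    have h1 : p - 2 ≤ Q.natDegree := le_natDegree_of_ne_zero (by rw [hQc]; exact one_ne_zero)
    rw [degree_eq_natDegree hQ0]
    exact_mod_cast (by omega : Q.natDegree ≠ 0)
  obtain ⟨ζ, hζroot⟩ := IsAlgClosed.exists_root Q hdQ
  have hsum : ∑ i ∈ Finset.range (p-1), ζ ^ i = 0 := by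
    have := hζroot
    rwa [IsRoot, hQ, eval_geom_sum] at this
  refine ⟨ζ, ?_, ?_⟩
  · have := geom_sum_mul ζ (p-1)
    rw [hsum, zero_mul] at this
    linear_combination -this
  · rintro rfl
    rw [Finset.sum_congr rfl (fun i _ => one_pow i), Finset.sum_const, Finset.card_range,
      nsmul_eq_mul, mul_one] at hsum
    have hcast : ((p - 1 : ℕ) : k) = -1 := by
      rw [Nat.cast_sub (by omega : 1 ≤ p), CharP.cast_eq_zero k p]; ring
    rw [hcast] at hsum
    exact (one_ne_zero : (1:k) ≠ 0) (by linear_combination -hsum)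

/-- The "in particular" clause of Lemma 5.2: there is no intermediate field `K` of
`k(T)/k` contained in both `k(T^p + T^(p-1))` and `k(T^(p-1))` with `k(T)` finite
over `K`. -/
theorem stmt_9 (p : ℕ) [Fact p.Prime] (hp2 : 2 < p) :
    ¬ ∃ K : IntermediateField (AlgebraicClosure (ZMod p))
        (RatFunc (AlgebraicClosure (ZMod p))),
      K ≤ IntermediateField.adjoin (AlgebraicClosure (ZMod p))
          {(RatFunc.X : RatFunc (AlgebraicClosure (ZMod p))) ^ p + RatFunc.X ^ (p - 1)} ∧
      K ≤ IntermediateField.adjoin (AlgebraicClosure (ZMod p))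
          {(RatFunc.X : RatFunc (AlgebraicClosure (ZMod p))) ^ (p - 1)} ∧
      FiniteDimensional K (RatFunc (AlgebraicClosure (ZMod p))) := by
  set k := AlgebraicClosure (ZMod p) with hk
  rintro ⟨K, hKf, hKg, hfin⟩
  set A : k[X] →+* RatFunc k := algebraMap k[X] (RatFunc k) with hA
  have hAinj : Function.Injective A := IsFractionRing.injective k[X] (RatFunc k)
  -- aeval at RatFunc.X is the algebra map
  have hAalg : ∀ q : k[X], Polynomial.aeval (RatFunc.X : RatFunc k) q = A q := by
    intro q
    have h1 : (Polynomial.aeval (RatFunc.X : RatFunc k) : k[X] →ₐ[k] RatFunc k) =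
        IsScalarTower.toAlgHom k k[X] (RatFunc k) := by
      apply Polynomial.algHom_ext
      simp [RatFunc.algebraMap_X]
    calc Polynomial.aeval (RatFunc.X : RatFunc k) q
        = (Polynomial.aeval (RatFunc.X : RatFunc k) : k[X] →ₐ[k] RatFunc k) q := rfl
      _ = IsScalarTower.toAlgHom k k[X] (RatFunc k) q := by rw [h1]
      _ = A q := rfl
  have haev : ∀ (q r : k[X]), Polynomial.aeval (A q) r = A (r.comp q) := by
    intro q r
    rw [← hAalg q, ← Polynomial.aeval_comp, hAalg]
  -- K is not the bottom field
  have hKbot : K ≠ ⊥ := by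
    rintro rfl
    haveI : FiniteDimensional k (RatFunc k) :=
      Module.Finite.trans (R := k) ((⊥ : IntermediateField k (RatFunc k))) (RatFunc k)
    have hint : IsIntegral k (RatFunc.X : RatFunc k) := IsIntegral.of_finite k _
    obtain ⟨P, hP0, hPeval⟩ := hint.isAlgebraic
    rw [hAalg] at hPeval
    exact hP0 (hAinj (by rw [hPeval, map_zero]))
  obtain ⟨h, hhK, hhbot⟩ := SetLike.exists_of_lt (show (⊥ : IntermediateField k (RatFunc k)) < K from lt_of_le_of_ne bot_le (Ne.symm hKbot))
  -- translate the adjoined elements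
  have hfX : (RatFunc.X : RatFunc k) ^ p + RatFunc.X ^ (p - 1) = A (X ^ p + X ^ (p-1)) := by
    rw [map_add, map_pow, map_pow, RatFunc.algebraMap_X]
  have hgX : (RatFunc.X : RatFunc k) ^ (p - 1) = A (X ^ (p-1)) := by
    rw [map_pow, RatFunc.algebraMap_X]
  rw [hfX] at hKf
  rw [hgX] at hKg
  obtain ⟨U, V, hUV⟩ := (IntermediateField.mem_adjoin_simple_iff k _).1 (hKf hhK)
  obtain ⟨R, S, hRS⟩ := (IntermediateField.mem_adjoin_simple_iff k _).1 (hKg hhK)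
  rw [haev, haev] at hUV
  rw [haev, haev] at hRS
  -- nonzero-ness
  have hbot0 : (0 : RatFunc k) ∈ (⊥ : IntermediateField k (RatFunc k)) := zero_mem _
  have hU0 : U ≠ 0 := by rintro rfl; rw [zero_comp, map_zero, zero_div] at hUV; exact hhbot (hUV ▸ hbot0)
  have hV0 : V ≠ 0 := by rintro rfl; rw [zero_comp, map_zero, div_zero] at hUV; exact hhbot (hUV ▸ hbot0)
  have hR0 : R ≠ 0 := by rintro rfl; rw [zero_comp, map_zero, zero_div] at hRS; exact hhbot (hRS ▸ hbot0)
  have hS0 : S ≠ 0 := by rintro rfl; rw [zero_comp, map_zero, div_zero] at hRS; exact hhbot (hRS ▸ hbot0)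
  -- reduce U/V to coprime u/v
  letI : DecidableEq k[X] := Classical.decEq _
  letI : GCDMonoid k[X] := EuclideanDomain.gcdMonoid _
  set g0 : k[X] := GCDMonoid.gcd U V with hg0def
  have hg0 : g0 ≠ 0 := fun hh => hU0 ((gcd_eq_zero_iff U V).1 hh).1
  have hgu : g0 * (U / g0) = U := EuclideanDomain.mul_div_cancel' hg0 (gcd_dvd_left U V)
  have hgv : g0 * (V / g0) = V := EuclideanDomain.mul_div_cancel' hg0 (gcd_dvd_right U V)
  set u : k[X] := U / g0 with hu_def
  set v : k[X] := V / g0 with hv_def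
  have hcop : IsCoprime u v := isCoprime_div_gcd_div_gcd hV0
  have hu0 : u ≠ 0 := fun hh => hU0 (by rw [← hgu, hh, mul_zero])
  have hv0 : v ≠ 0 := fun hh => hV0 (by rw [← hgv, hh, mul_zero])
  have hg0f : A (g0.comp (X ^ p + X ^ (p-1))) ≠ 0 := fun hh =>
    fp_comp_ne_zero p hp2 g0 hg0 (hAinj (by rw [hh, map_zero]))
  have huv : h = A (u.comp (X ^ p + X ^ (p-1))) / A (v.comp (X ^ p + X ^ (p-1))) := by
    rw [hUV, ← hgu, ← hgv, mul_comp, mul_comp, map_mul, map_mul,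
      mul_div_mul_left _ _ hg0f]
  -- nonzero denominators in RatFunc
  have hvf : A (v.comp (X ^ p + X ^ (p-1))) ≠ 0 := fun hh =>
    fp_comp_ne_zero p hp2 v hv0 (hAinj (by rw [hh, map_zero]))
  have huf : A (u.comp (X ^ p + X ^ (p-1))) ≠ 0 := fun hh =>
    fp_comp_ne_zero p hp2 u hu0 (hAinj (by rw [hh, map_zero]))
  have hgp_ne : (X ^ (p-1) : k[X]).natDegree ≠ 0 := by
    rw [natDegree_X_pow]; omega
  have hSg : S.comp (X ^ (p-1)) ≠ 0 := by
    intro hh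
    have := leadingCoeff_comp (p := S) (q := (X ^ (p-1) : k[X])) hgp_ne
    rw [hh, leadingCoeff_zero, leadingCoeff_X_pow, one_pow, mul_one] at this
    exact hS0 (leadingCoeff_eq_zero.1 this.symm)
  have hSg' : A (S.comp (X ^ (p-1))) ≠ 0 := fun hh => hSg (hAinj (by rw [hh, map_zero]))
  -- the master identity in k[X]
  have hid1 : u.comp (X ^ p + X ^ (p-1)) * S.comp (X ^ (p-1))
      = R.comp (X ^ (p-1)) * v.comp (X ^ p + X ^ (p-1)) := by
    apply hAinj
    rw [map_mul, map_mul]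
    exact (div_eq_div_iff hvf hSg').1 (by rw [← huv, hRS])
  -- pick a nontrivial (p-1)-st root of unity
  obtain ⟨ζ, hζ1, hζne⟩ := exists_zeta (k := k) p hp2
  have hgL : (X ^ (p-1) : k[X]).comp (C ζ * X) = X ^ (p-1) := by
    rw [pow_comp, X_comp, mul_pow, ← C_pow, hζ1, C_1, one_mul]
  have hid2 : (u.comp (X ^ p + X ^ (p-1))).comp (C ζ * X) * S.comp (X ^ (p-1))
      = R.comp (X ^ (p-1)) * (v.comp (X ^ p + X ^ (p-1))).comp (C ζ * X) := by
    have h2 := congrArg (fun q : k[X] => q.comp (C ζ * X)) hid1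
    simp only [mul_comp] at h2
    rwa [comp_assoc S, hgL, comp_assoc R, hgL] at h2
  have hmain : (u.comp (X ^ p + X ^ (p-1))).comp (C ζ * X) * v.comp (X ^ p + X ^ (p-1))
      = u.comp (X ^ p + X ^ (p-1)) * (v.comp (X ^ p + X ^ (p-1))).comp (C ζ * X) := by
    apply mul_right_cancel₀ hSg
    linear_combination v.comp (X ^ p + X ^ (p-1)) * hid2
      - (v.comp (X ^ p + X ^ (p-1))).comp (C ζ * X) * hid1
  have hcomp_cop : ∀ (a b q : k[X]), IsCoprime a b → IsCoprime (a.comp q) (b.comp q) := by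
    rintro a b q ⟨x, y, hxy⟩
    exact ⟨x.comp q, y.comp q, by
      rw [← one_comp (p := q), ← hxy]; simp [add_comp, mul_comp]⟩
  have hcopf := hcomp_cop u v (X ^ p + X ^ (p-1)) hcop
  have hcopfL := hcomp_cop (u.comp (X ^ p + X ^ (p-1))) (v.comp (X ^ p + X ^ (p-1)))
    (C ζ * X) hcopf
  -- u side
  have du1 : u.comp (X ^ p + X ^ (p-1)) ∣ (u.comp (X ^ p + X ^ (p-1))).comp (C ζ * X) :=
    hcopf.dvd_of_dvd_mul_right ⟨(v.comp (X ^ p + X ^ (p-1))).comp (C ζ * X), hmain⟩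
  have du2 : (u.comp (X ^ p + X ^ (p-1))).comp (C ζ * X) ∣ u.comp (X ^ p + X ^ (p-1)) :=
    hcopfL.dvd_of_dvd_mul_right ⟨v.comp (X ^ p + X ^ (p-1)), hmain.symm⟩
  obtain ⟨w, hw⟩ := associated_of_dvd_dvd du1 du2
  obtain ⟨cu, _, hcuC⟩ := Polynomial.isUnit_iff.1 w.isUnit
  have hu_deg : u.natDegree = 0 := by
    refine iso_core p hp2 ζ hζ1 hζne u.natDegree u le_rfl hu0 ⟨cu, ?_⟩
    rw [← hw, ← hcuC, mul_comm]
  -- v side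
  have dv1 : v.comp (X ^ p + X ^ (p-1)) ∣ (v.comp (X ^ p + X ^ (p-1))).comp (C ζ * X) :=
    hcopf.symm.dvd_of_dvd_mul_right
      ⟨(u.comp (X ^ p + X ^ (p-1))).comp (C ζ * X), by linear_combination -hmain⟩
  have dv2 : (v.comp (X ^ p + X ^ (p-1))).comp (C ζ * X) ∣ v.comp (X ^ p + X ^ (p-1)) :=
    hcopfL.symm.dvd_of_dvd_mul_right ⟨u.comp (X ^ p + X ^ (p-1)), by linear_combination hmain⟩
  obtain ⟨w', hw'⟩ := associated_of_dvd_dvd dv1 dv2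
  obtain ⟨cv, _, hcvC⟩ := Polynomial.isUnit_iff.1 w'.isUnit
  have hv_deg : v.natDegree = 0 := by
    refine iso_core p hp2 ζ hζ1 hζne v.natDegree v le_rfl hv0 ⟨cv, ?_⟩
    rw [← hw', ← hcvC, mul_comm]
  -- conclude h is a constant
  have hfinal : h ∈ (⊥ : IntermediateField k (RatFunc k)) := by
    rw [IntermediateField.mem_bot]
    obtain ⟨cu0, hcu0⟩ := natDegree_eq_zero.1 hu_deg
    obtain ⟨cv0, hcv0⟩ := natDegree_eq_zero.1 hv_deg
    refine ⟨cu0 / cv0, ?_⟩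
    have hAc : ∀ a : k, algebraMap k (RatFunc k) a = A (C a) := by
      intro a
      rw [IsScalarTower.algebraMap_apply k k[X] (RatFunc k), Polynomial.algebraMap_eq]
    rw [map_div₀, hAc, hAc, huv, ← hcu0, ← hcv0, C_comp, C_comp]
  exact hhbot hfinal
end
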